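/- If (β_l⁰, β_u⁰, d⁰) minimizes E[Y - β_l·1(X ≤ d) - β_u·1(X > d)]² over all (β_l, β_u, d), and the minimizer is an interior stationary point with the regression function f continuous at d⁰ and p_X(d⁰) > 0, then β_l⁰ = E(Y | X ≤ d⁰), β_u⁰ = E(Y | X > d⁰), and f(d⁰) = (β_l⁰ + β_u⁰)/2. -/

import Mathlib

open MeasureTheory ProbabilityTheory
open scoped ENNReal NNReal

private lemma quad_aux {a b : ℝ} (ha : 0 ≤ a) (H : ∀ t : ℝ, 0 ≤ a * t ^ 2 + b * t) : b = 0 := by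
  have h := H (-b / (a + 1))
  have ha1 : (0:ℝ) < a + 1 := by linarith
  have key : a * (-b / (a + 1)) ^ 2 + b * (-b / (a + 1)) = -b ^ 2 / (a + 1) ^ 2 := by
    field_simp
    ring
  rw [key] at h
  rcases div_nonneg_iff.mp h with ⟨h1, _⟩ | ⟨_, h2⟩
  · nlinarith [sq_nonneg b]
  · nlinarith [pow_pos ha1 2]

private lemma right_aux {h : ℝ → ℝ} {d0 : ℝ} (hint : Integrable h)
    (hc : ContinuousAt h d0)
    (H : ∀ d, d0 < d → 0 ≤ ∫ x in Set.Ioc d0 d, h x) : 0 ≤ h d0 := by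
  by_contra hlt
  push_neg at hlt
  have hε : 0 < -h d0 / 2 := by linarith
  obtain ⟨δ, hδ, hball⟩ := Metric.continuousAt_iff.mp hc (-h d0 / 2) hε
  have hdd : d0 < d0 + δ / 2 := by linarith
  have hbound : ∀ x ∈ Set.Ioc d0 (d0 + δ / 2), h x ≤ h d0 / 2 := by
    intro x hx
    have hdist : dist x d0 < δ := by
      rw [Real.dist_eq, abs_of_pos (by linarith [hx.1] : 0 < x - d0)]
      linarith [hx.2]
    have h2 := abs_lt.mp (Real.dist_eq _ _ ▸ hball hdist)
    linarith [h2.1, h2.2]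
  have hmono : (∫ x in Set.Ioc d0 (d0 + δ / 2), h x) ≤ ∫ x in Set.Ioc d0 (d0 + δ / 2), h d0 / 2 :=
    setIntegral_mono_on hint.integrableOn
      (integrableOn_const measure_Ioc_lt_top.ne) measurableSet_Ioc hbound
  have hconst : (∫ x in Set.Ioc d0 (d0 + δ / 2), h d0 / 2) = (δ / 2) * (h d0 / 2) := by
    rw [setIntegral_const, measureReal_def, Real.volume_Ioc, smul_eq_mul]
    congr 1
    rw [show d0 + δ / 2 - d0 = δ / 2 by ring, ENNReal.toReal_ofReal (by linarith)]
  have := H _ hdd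
  rw [hconst] at hmono
  nlinarith

private lemma left_aux {h : ℝ → ℝ} {d0 : ℝ} (hint : Integrable h)
    (hc : ContinuousAt h d0)
    (H : ∀ d, d < d0 → (∫ x in Set.Ioc d d0, h x) ≤ 0) : h d0 ≤ 0 := by
  by_contra hlt
  push_neg at hlt
  have hε : 0 < h d0 / 2 := by linarith
  obtain ⟨δ, hδ, hball⟩ := Metric.continuousAt_iff.mp hc (h d0 / 2) hε
  have hdd : d0 - δ / 2 < d0 := by linarith
  have hbound : ∀ x ∈ Set.Ioc (d0 - δ / 2) d0, h d0 / 2 ≤ h x := by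
    intro x hx
    have hdist : dist x d0 < δ := by
      rw [Real.dist_eq, abs_lt]
      constructor
      · linarith [hx.1]
      · linarith [hx.2]
    have h2 := abs_lt.mp (Real.dist_eq _ _ ▸ hball hdist)
    linarith [h2.1, h2.2]
  have hmono : (∫ x in Set.Ioc (d0 - δ / 2) d0, h d0 / 2) ≤ ∫ x in Set.Ioc (d0 - δ / 2) d0, h x :=
    setIntegral_mono_on (integrableOn_const measure_Ioc_lt_top.ne)
      hint.integrableOn measurableSet_Ioc hbound
  have hconst : (∫ x in Set.Ioc (d0 - δ / 2) d0, h d0 / 2) = (δ / 2) * (h d0 / 2) := by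
    rw [setIntegral_const, measureReal_def, Real.volume_Ioc, smul_eq_mul]
    congr 1
    rw [show d0 - (d0 - δ / 2) = δ / 2 by ring, ENNReal.toReal_ofReal (by linarith)]
  have := H _ hdd
  rw [hconst] at hmono
  nlinarith

private lemma perturb_aux {Ω : Type*} [MeasureSpace Ω] [IsProbabilityMeasure (ℙ : Measure Ω)]
    {g : Ω → ℝ} (hg : MemLp g 2 ℙ) {s : Set Ω} (hs : MeasurableSet s)
    (H : ∀ t : ℝ, (∫ ω, g ω ^ 2 ∂ℙ) ≤ ∫ ω, (g ω - s.indicator (fun _ => t) ω) ^ 2 ∂ℙ) :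
    (∫ ω in s, g ω ∂ℙ) = 0 := by
  have hgi : Integrable g ℙ := hg.integrable one_le_two
  have hg2 : Integrable (fun ω => g ω ^ 2) ℙ := hg.integrable_sq
  have hInd : ∀ t : ℝ, Integrable (s.indicator (fun ω => t ^ 2 - 2 * t * g ω)) ℙ := fun t =>
    ((integrable_const _).sub (hgi.const_mul _)).indicator hs
  have hexp : ∀ t : ℝ, (∫ ω, (g ω - s.indicator (fun _ => t) ω) ^ 2 ∂ℙ)
      = (∫ ω, g ω ^ 2 ∂ℙ) + ((ℙ s).toReal * t ^ 2 + (-2 * ∫ ω in s, g ω ∂ℙ) * t) := by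
    intro t
    have heq : (fun ω => (g ω - s.indicator (fun _ => t) ω) ^ 2)
        = fun ω => g ω ^ 2 + s.indicator (fun ω => t ^ 2 - 2 * t * g ω) ω := by
      funext ω
      by_cases hω : ω ∈ s
      · simp only [Set.indicator_of_mem hω]
        ring
      · simp only [Set.indicator_of_notMem hω]
        ring
    rw [heq, integral_add hg2 (hInd t), integral_indicator hs]
    have hsub : (∫ ω in s, (t ^ 2 - 2 * t * g ω) ∂ℙ)
        = (ℙ s).toReal * t ^ 2 - 2 * t * ∫ ω in s, g ω ∂ℙ := by
      rw [integral_sub (integrableOn_const (C := t ^ 2) (measure_lt_top ℙ s).ne)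
        ((hgi.integrableOn).const_mul _), MeasureTheory.integral_const_mul, setIntegral_const, measureReal_def,
        smul_eq_mul]
    rw [hsub]
    ring
  have hq : ∀ t : ℝ, 0 ≤ (ℙ s).toReal * t ^ 2 + (-2 * ∫ ω in s, g ω ∂ℙ) * t := by
    intro t
    have h := H t
    rw [hexp t] at h
    linarith
  have := quad_aux ENNReal.toReal_nonneg hq
  linarith

theorem stmt0 {Ω : Type*} [MeasureSpace Ω] [IsProbabilityMeasure (ℙ : Measure Ω)]
    (X Y : Ω → ℝ) (hX : Measurable X) (hYm : Measurable Y) (hY2 : MemLp Y 2 ℙ)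
    (f pX : ℝ → ℝ) (hfm : Measurable f)
    (hfX : Integrable (fun ω => f (X ω)) ℙ)
    (hreg : ∀ s : Set ℝ, MeasurableSet s →
      (∫ ω in X ⁻¹' s, Y ω ∂ℙ) = ∫ ω in X ⁻¹' s, f (X ω) ∂ℙ)
    (hpc : Continuous pX) (hp0 : ∀ x, 0 ≤ pX x)
    (hdens : Measure.map X ℙ
      = (volume : Measure ℝ).withDensity fun x => ENNReal.ofReal (pX x))
    (βl0 βu0 d0 : ℝ) (hfc : ContinuousAt f d0) (hpd : 0 < pX d0)
    (hmin : ∀ bl bu d : ℝ,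
      (∫ ω, (Y ω - (if X ω ≤ d0 then βl0 else βu0)) ^ 2 ∂ℙ)
        ≤ ∫ ω, (Y ω - (if X ω ≤ d then bl else bu)) ^ 2 ∂ℙ) :
    βl0 = (∫ ω, (if X ω ≤ d0 then Y ω else 0) ∂ℙ) / (ℙ (X ⁻¹' Set.Iic d0)).toReal ∧
    βu0 = (∫ ω, (if X ω ≤ d0 then 0 else Y ω) ∂ℙ) / (ℙ (X ⁻¹' Set.Ioi d0)).toReal ∧
    f d0 = (βl0 + βu0) / 2 := by
  classical
  have hYi : Integrable Y ℙ := hY2.integrable one_le_two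
  have hnn : Measurable fun x => (pX x).toNNReal := measurable_real_toNNReal.comp hpc.measurable
  have hdens' : Measure.map X ℙ
      = (volume : Measure ℝ).withDensity fun x => ((pX x).toNNReal : ℝ≥0∞) := hdens
  -- transfer of Y-integrals to densities
  have hTY : ∀ s : Set ℝ, MeasurableSet s →
      (∫ ω in X ⁻¹' s, Y ω ∂ℙ) = ∫ x in s, pX x * f x := by
    intro s hs
    rw [hreg s hs, ← setIntegral_map hs hfm.aestronglyMeasurable hX.aemeasurable, hdens']
    rw [show ((volume : Measure ℝ).withDensity fun x => ((pX x).toNNReal : ℝ≥0∞)).restrict s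
        = ((volume : Measure ℝ).restrict s).withDensity fun x => ((pX x).toNNReal : ℝ≥0∞)
      from restrict_withDensity hs _]
    rw [integral_withDensity_eq_integral_smul hnn]
    exact integral_congr_ae (Filter.Eventually.of_forall fun x => by
      show (pX x).toNNReal • f x = pX x * f x
      rw [NNReal.smul_def, Real.coe_toNNReal _ (hp0 x), smul_eq_mul])
  -- transfer of measures to densities
  have hTP : ∀ s : Set ℝ, MeasurableSet s →
      (ℙ (X ⁻¹' s)).toReal = ∫ x in s, pX x := by
    intro s hs
    rw [← Measure.map_apply hX hs, hdens, withDensity_apply _ hs,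
      integral_eq_lintegral_of_nonneg_ae (Filter.Eventually.of_forall fun x => hp0 x)
        hpc.aestronglyMeasurable.restrict]
  -- integrability of pX and pX * f
  have huniv : (∫⁻ x, ENNReal.ofReal (pX x)) = 1 := by
    have h := congrArg (fun μ : Measure ℝ => μ Set.univ) hdens
    simp only [Measure.map_apply hX MeasurableSet.univ, Set.preimage_univ, measure_univ,
      withDensity_apply _ MeasurableSet.univ, Measure.restrict_univ] at h
    exact h.symm
  have hpXint : Integrable pX := by
    refine ⟨hpc.aestronglyMeasurable, ?_⟩
    rw [hasFiniteIntegral_iff_ofReal (Filter.Eventually.of_forall hp0), huniv]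
    exact ENNReal.one_lt_top
  have hfpX : Integrable (fun x => pX x * f x) := by
    have hfmap : Integrable f (Measure.map X ℙ) :=
      (integrable_map_measure hfm.aestronglyMeasurable hX.aemeasurable).mpr hfX
    rw [hdens'] at hfmap
    have h2 := (integrable_withDensity_iff_integrable_smul hnn).mp hfmap
    refine h2.congr (Filter.Eventually.of_forall fun x => ?_)
    show (pX x).toNNReal • f x = pX x * f x
    rw [NNReal.smul_def, Real.coe_toNNReal _ (hp0 x), smul_eq_mul]
  -- positivity of the two cell probabilities
  obtain ⟨δ, hδpos, hδ⟩ : ∃ δ > 0, ∀ x, dist x d0 < δ → pX d0 / 2 ≤ pX x := by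
    obtain ⟨δ, hδ, hb⟩ := Metric.continuousAt_iff.mp hpc.continuousAt (pX d0 / 2) (by linarith)
    refine ⟨δ, hδ, fun x hx => ?_⟩
    have := abs_lt.mp (Real.dist_eq _ _ ▸ hb hx)
    linarith [this.1]
  have hIoc_lb : ∀ a b : ℝ, a < b → (∀ x ∈ Set.Ioc a b, dist x d0 < δ) →
      0 < ∫ x in Set.Ioc a b, pX x := by
    intro a b hab hsub
    have hm : (∫ x in Set.Ioc a b, pX d0 / 2) ≤ ∫ x in Set.Ioc a b, pX x :=
      setIntegral_mono_on (integrableOn_const measure_Ioc_lt_top.ne)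
        hpXint.integrableOn measurableSet_Ioc (fun x hx => hδ x (hsub x hx))
    have hc : (∫ x in Set.Ioc a b, pX d0 / 2) = (b - a) * (pX d0 / 2) := by
      rw [setIntegral_const, measureReal_def, Real.volume_Ioc, smul_eq_mul, ENNReal.toReal_ofReal (by linarith)]
    nlinarith
  have hPA : 0 < (ℙ (X ⁻¹' Set.Iic d0)).toReal := by
    rw [hTP _ measurableSet_Iic]
    have h1 : 0 < ∫ x in Set.Ioc (d0 - δ / 2) d0, pX x := by
      refine hIoc_lb _ _ (by linarith) fun x hx => ?_
      rw [Real.dist_eq, abs_lt]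
      constructor
      · linarith [hx.1]
      · linarith [hx.2]
    have h2 : (∫ x in Set.Ioc (d0 - δ / 2) d0, pX x) ≤ ∫ x in Set.Iic d0, pX x :=
      setIntegral_mono_set hpXint.integrableOn (Filter.Eventually.of_forall fun x => hp0 x)
        (HasSubset.Subset.eventuallyLE Set.Ioc_subset_Iic_self)
    linarith
  have hPB : 0 < (ℙ (X ⁻¹' Set.Ioi d0)).toReal := by
    rw [hTP _ measurableSet_Ioi]
    have h1 : 0 < ∫ x in Set.Ioc d0 (d0 + δ / 2), pX x := by
      refine hIoc_lb _ _ (by linarith) fun x hx => ?_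
      rw [Real.dist_eq, abs_lt]
      constructor
      · linarith [hx.1]
      · linarith [hx.2]
    have h2 : (∫ x in Set.Ioc d0 (d0 + δ / 2), pX x) ≤ ∫ x in Set.Ioi d0, pX x :=
      setIntegral_mono_set hpXint.integrableOn (Filter.Eventually.of_forall fun x => hp0 x)
        (HasSubset.Subset.eventuallyLE Set.Ioc_subset_Ioi_self)
    linarith
  -- membership / measurability facts
  have hA : MeasurableSet (X ⁻¹' Set.Iic d0) := hX measurableSet_Iic
  have hB : MeasurableSet (X ⁻¹' Set.Ioi d0) := hX measurableSet_Ioi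
  -- MemLp of stump functions
  have hW2 : ∀ bl bu d : ℝ, MemLp (fun ω => if X ω ≤ d then bl else bu) 2 ℙ := by
    intro bl bu d
    have hWm : Measurable fun ω => if X ω ≤ d then bl else bu :=
      Measurable.ite (measurableSet_le hX measurable_const) measurable_const measurable_const
    refine MemLp.of_bound hWm.aestronglyMeasurable (max |bl| |bu|)
      (Filter.Eventually.of_forall fun ω => ?_)
    by_cases h : X ω ≤ d
    · simp only [h, if_true, Real.norm_eq_abs]
      exact le_max_left _ _
    · simp only [h, if_false, Real.norm_eq_abs]
      exact le_max_right _ _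
  have hsq : ∀ bl bu d : ℝ,
      Integrable (fun ω => (Y ω - (if X ω ≤ d then bl else bu)) ^ 2) ℙ := fun bl bu d =>
    (hY2.sub (hW2 bl bu d)).integrable_sq
  -- Part 1: βl0 is the conditional mean on {X ≤ d0}
  have e1 : (∫ ω in X ⁻¹' Set.Iic d0, (Y ω - (if X ω ≤ d0 then βl0 else βu0)) ∂ℙ) = 0 := by
    refine perturb_aux (g := fun ω => Y ω - (if X ω ≤ d0 then βl0 else βu0))
      (hY2.sub (hW2 βl0 βu0 d0)) hA ?_
    intro t
    refine (hmin (βl0 + t) βu0 d0).trans_eq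
      (integral_congr_ae (Filter.Eventually.of_forall fun ω => ?_)).symm
    by_cases hω : X ω ≤ d0 <;>
      simp only [Set.indicator_apply, Set.mem_preimage, Set.mem_Iic, hω, if_true, if_false] <;>
      ring
  have e1' : (∫ ω in X ⁻¹' Set.Iic d0, Y ω ∂ℙ) = βl0 * (ℙ (X ⁻¹' Set.Iic d0)).toReal := by
    have hcongr : (∫ ω in X ⁻¹' Set.Iic d0, (Y ω - (if X ω ≤ d0 then βl0 else βu0)) ∂ℙ)
        = ∫ ω in X ⁻¹' Set.Iic d0, (Y ω - βl0) ∂ℙ := by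
      refine setIntegral_congr_fun hA fun ω hω => ?_
      have : X ω ≤ d0 := hω
      simp [this]
    rw [hcongr, integral_sub hYi.integrableOn
      (integrableOn_const (measure_lt_top _ _).ne), setIntegral_const, measureReal_def,
      smul_eq_mul] at e1
    linarith
  have goal1 : βl0 = (∫ ω, (if X ω ≤ d0 then Y ω else 0) ∂ℙ) / (ℙ (X ⁻¹' Set.Iic d0)).toReal := by
    have hind : (∫ ω, (if X ω ≤ d0 then Y ω else 0) ∂ℙ) = ∫ ω in X ⁻¹' Set.Iic d0, Y ω ∂ℙ := by
      rw [← integral_indicator hA]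
      refine integral_congr_ae (Filter.Eventually.of_forall fun ω => ?_)
      by_cases hω : X ω ≤ d0 <;>
        simp [Set.indicator_apply, Set.mem_preimage, Set.mem_Iic, hω]
    rw [hind, e1', mul_div_assoc, div_self hPA.ne', mul_one]
  -- Part 2: βu0 is the conditional mean on {X > d0}
  have e2 : (∫ ω in X ⁻¹' Set.Ioi d0, (Y ω - (if X ω ≤ d0 then βl0 else βu0)) ∂ℙ) = 0 := by
    refine perturb_aux (g := fun ω => Y ω - (if X ω ≤ d0 then βl0 else βu0))
      (hY2.sub (hW2 βl0 βu0 d0)) hB ?_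
    intro t
    refine (hmin βl0 (βu0 + t) d0).trans_eq
      (integral_congr_ae (Filter.Eventually.of_forall fun ω => ?_)).symm
    by_cases hω : X ω ≤ d0
    · simp only [Set.indicator_apply, Set.mem_preimage, Set.mem_Ioi, not_lt.mpr hω, if_false,
        hω, if_true]
      ring
    · simp only [Set.indicator_apply, Set.mem_preimage, Set.mem_Ioi, not_le.mp hω, if_true,
        hω, if_false]
      ring
  have e2' : (∫ ω in X ⁻¹' Set.Ioi d0, Y ω ∂ℙ) = βu0 * (ℙ (X ⁻¹' Set.Ioi d0)).toReal := by
    have hcongr : (∫ ω in X ⁻¹' Set.Ioi d0, (Y ω - (if X ω ≤ d0 then βl0 else βu0)) ∂ℙ)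
        = ∫ ω in X ⁻¹' Set.Ioi d0, (Y ω - βu0) ∂ℙ := by
      refine setIntegral_congr_fun hB fun ω hω => ?_
      have h1 : d0 < X ω := hω
      simp [not_le.mpr h1]
    rw [hcongr, integral_sub hYi.integrableOn
      (integrableOn_const (measure_lt_top _ _).ne), setIntegral_const, measureReal_def,
      smul_eq_mul] at e2
    linarith
  have goal2 : βu0 = (∫ ω, (if X ω ≤ d0 then 0 else Y ω) ∂ℙ) / (ℙ (X ⁻¹' Set.Ioi d0)).toReal := by
    have hind : (∫ ω, (if X ω ≤ d0 then 0 else Y ω) ∂ℙ) = ∫ ω in X ⁻¹' Set.Ioi d0, Y ω ∂ℙ := by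
      rw [← integral_indicator hB]
      refine integral_congr_ae (Filter.Eventually.of_forall fun ω => ?_)
      by_cases hω : X ω ≤ d0
      · simp [Set.indicator_apply, Set.mem_preimage, Set.mem_Ioi, not_lt.mpr hω, hω]
      · simp [Set.indicator_apply, Set.mem_preimage, Set.mem_Ioi, not_le.mp hω, hω]
    rw [hind, e2', mul_div_assoc, div_self hPB.ne', mul_one]
  -- Part 3
  refine ⟨goal1, goal2, ?_⟩
  by_cases hne : βu0 = βl0
  · -- degenerate case: βu0 = βl0
    have hdeg : ∀ d : ℝ, (∫ ω in X ⁻¹' Set.Iic d, (Y ω - βl0) ∂ℙ) = 0 := by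
      intro d
      refine perturb_aux (g := fun ω => Y ω - βl0) (hY2.sub (memLp_const βl0))
        (hX measurableSet_Iic) ?_
      intro t
      have h1 : (∫ ω, (Y ω - βl0) ^ 2 ∂ℙ)
          = ∫ ω, (Y ω - (if X ω ≤ d0 then βl0 else βu0)) ^ 2 ∂ℙ :=
        integral_congr_ae (Filter.Eventually.of_forall fun ω => by simp [hne])
      refine (le_of_eq h1).trans ((hmin (βl0 + t) βu0 d).trans_eq
        (integral_congr_ae (Filter.Eventually.of_forall fun ω => ?_)).symm)
      by_cases hω : X ω ≤ d <;>
        simp only [Set.indicator_apply, Set.mem_preimage, Set.mem_Iic, hω, if_true, if_false,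
          hne] <;>
        ring
    have hkint : Integrable (fun x => pX x * f x - βl0 * pX x) :=
      hfpX.sub (hpXint.const_mul βl0)
    have hIic : ∀ d : ℝ, (∫ x in Set.Iic d, (pX x * f x - βl0 * pX x)) = 0 := by
      intro d
      have h1 := hdeg d
      rw [integral_sub hYi.integrableOn (integrableOn_const (measure_lt_top _ _).ne),
        setIntegral_const, measureReal_def, smul_eq_mul] at h1
      rw [integral_sub hfpX.integrableOn ((hpXint.integrableOn).const_mul βl0),
        MeasureTheory.integral_const_mul, ← hTY _ measurableSet_Iic, ← hTP _ measurableSet_Iic]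
      linarith
    have hIoc0 : ∀ d : ℝ, d0 < d → (∫ x in Set.Ioc d0 d, (pX x * f x - βl0 * pX x)) = 0 := by
      intro d hd
      have hsplit := setIntegral_union (s := Set.Iic d0) (t := Set.Ioc d0 d)
        (f := fun x => pX x * f x - βl0 * pX x) (μ := (volume : Measure ℝ))
        (Set.Iic_disjoint_Ioc le_rfl) measurableSet_Ioc
        hkint.integrableOn hkint.integrableOn
      rw [Set.Iic_union_Ioc_eq_Iic hd.le, hIic d, hIic d0] at hsplit
      linarith
    have hkc : ContinuousAt (fun x => pX x * f x - βl0 * pX x) d0 :=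
      ((hpc.continuousAt).mul hfc).sub (continuousAt_const.mul hpc.continuousAt)
    have hk0 : pX d0 * f d0 - βl0 * pX d0 = 0 := by
      have h1 : 0 ≤ pX d0 * f d0 - βl0 * pX d0 :=
        right_aux (h := fun x => pX x * f x - βl0 * pX x) hkint hkc
          fun d hd => (hIoc0 d hd).ge
      have h2 : 0 ≤ -(pX d0 * f d0 - βl0 * pX d0) :=
        right_aux (h := fun x => -(pX x * f x - βl0 * pX x)) hkint.neg hkc.neg
          (fun d hd => by rw [integral_neg, hIoc0 d hd, neg_zero])
      linarith
    have hfb : f d0 = βl0 := by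
      have h := mul_left_cancel₀ hpd.ne' (show pX d0 * f d0 = pX d0 * βl0 by linarith)
      exact h
    rw [hfb, hne]
    ring
  · -- nondegenerate case: βu0 ≠ βl0
    have hkint : Integrable
        (fun x => 2 * (βu0 - βl0) * (pX x * f x) + (βl0 ^ 2 - βu0 ^ 2) * pX x) :=
      (hfpX.const_mul _).add (hpXint.const_mul _)
    have hkc : ContinuousAt
        (fun x => 2 * (βu0 - βl0) * (pX x * f x) + (βl0 ^ 2 - βu0 ^ 2) * pX x) d0 :=
      (continuousAt_const.mul ((hpc.continuousAt).mul hfc)).add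
        (continuousAt_const.mul hpc.continuousAt)
    have hIoc : ∀ a b : ℝ,
        (∫ ω in X ⁻¹' Set.Ioc a b, (2 * (βu0 - βl0) * Y ω + (βl0 ^ 2 - βu0 ^ 2)) ∂ℙ)
          = ∫ x in Set.Ioc a b,
              (2 * (βu0 - βl0) * (pX x * f x) + (βl0 ^ 2 - βu0 ^ 2) * pX x) := by
      intro a b
      rw [integral_add ((hYi.integrableOn).const_mul _)
          (integrableOn_const (measure_lt_top _ _).ne),
        integral_add ((hfpX.integrableOn).const_mul _) ((hpXint.integrableOn).const_mul _),
        MeasureTheory.integral_const_mul, MeasureTheory.integral_const_mul,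
        MeasureTheory.integral_const_mul, setIntegral_const, measureReal_def, smul_eq_mul,
        hTY _ measurableSet_Ioc, hTP _ measurableSet_Ioc]
      ring
    have hR : ∀ d, d0 < d → 0 ≤ ∫ x in Set.Ioc d0 d,
        (2 * (βu0 - βl0) * (pX x * f x) + (βl0 ^ 2 - βu0 ^ 2) * pX x) := by
      intro d hd
      rw [← hIoc d0 d]
      have hms : MeasurableSet (X ⁻¹' Set.Ioc d0 d) := hX measurableSet_Ioc
      have key : (∫ ω, (Y ω - (if X ω ≤ d then βl0 else βu0)) ^ 2 ∂ℙ)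
            - (∫ ω, (Y ω - (if X ω ≤ d0 then βl0 else βu0)) ^ 2 ∂ℙ)
          = ∫ ω in X ⁻¹' Set.Ioc d0 d, (2 * (βu0 - βl0) * Y ω + (βl0 ^ 2 - βu0 ^ 2)) ∂ℙ := by
        rw [← integral_sub (hsq βl0 βu0 d) (hsq βl0 βu0 d0), ← integral_indicator hms]
        refine integral_congr_ae (Filter.Eventually.of_forall fun ω => ?_)
        by_cases h1 : X ω ≤ d0
        · have h2 : X ω ≤ d := h1.trans hd.le
          have h3 : ω ∉ X ⁻¹' Set.Ioc d0 d := by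
            simp [Set.mem_preimage, Set.mem_Ioc, not_lt.mpr h1]
          simp only [h1, h2, if_true, Set.indicator_of_notMem h3]
          ring
        · by_cases h2 : X ω ≤ d
          · have h3 : ω ∈ X ⁻¹' Set.Ioc d0 d := by
              simp [Set.mem_preimage, Set.mem_Ioc, not_le.mp h1, h2]
            simp only [h1, h2, if_true, if_false, Set.indicator_of_mem h3]
            ring
          · have h3 : ω ∉ X ⁻¹' Set.Ioc d0 d := by
              simp [Set.mem_preimage, Set.mem_Ioc, h2]
            simp only [h1, h2, if_false, Set.indicator_of_notMem h3]
            ring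
      have hm := hmin βl0 βu0 d
      linarith
    have hL : ∀ d, d < d0 → (∫ x in Set.Ioc d d0,
        (2 * (βu0 - βl0) * (pX x * f x) + (βl0 ^ 2 - βu0 ^ 2) * pX x)) ≤ 0 := by
      intro d hd
      rw [← hIoc d d0]
      have hms : MeasurableSet (X ⁻¹' Set.Ioc d d0) := hX measurableSet_Ioc
      have key : (∫ ω, (Y ω - (if X ω ≤ d then βl0 else βu0)) ^ 2 ∂ℙ)
            - (∫ ω, (Y ω - (if X ω ≤ d0 then βl0 else βu0)) ^ 2 ∂ℙ)
          = - ∫ ω in X ⁻¹' Set.Ioc d d0, (2 * (βu0 - βl0) * Y ω + (βl0 ^ 2 - βu0 ^ 2)) ∂ℙ := by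
        rw [← integral_sub (hsq βl0 βu0 d) (hsq βl0 βu0 d0), ← integral_neg,
          ← integral_indicator hms]
        refine integral_congr_ae (Filter.Eventually.of_forall fun ω => ?_)
        by_cases h1 : X ω ≤ d
        · have h2 : X ω ≤ d0 := h1.trans hd.le
          have h3 : ω ∉ X ⁻¹' Set.Ioc d d0 := by
            simp [Set.mem_preimage, Set.mem_Ioc, not_lt.mpr h1]
          simp only [h1, h2, if_true, Set.indicator_of_notMem h3]
          ring
        · by_cases h2 : X ω ≤ d0
          · have h3 : ω ∈ X ⁻¹' Set.Ioc d d0 := by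
              simp [Set.mem_preimage, Set.mem_Ioc, not_le.mp h1, h2]
            simp only [h1, h2, if_true, if_false, Set.indicator_of_mem h3]
            ring
          · have h3 : ω ∉ X ⁻¹' Set.Ioc d d0 := by
              simp [Set.mem_preimage, Set.mem_Ioc, h2]
            simp only [h1, h2, if_false, Set.indicator_of_notMem h3]
            ring
      have hm := hmin βl0 βu0 d
      linarith
    have hk0 : 2 * (βu0 - βl0) * (pX d0 * f d0) + (βl0 ^ 2 - βu0 ^ 2) * pX d0 = 0 :=
      le_antisymm
        (left_aux (h := fun x => 2 * (βu0 - βl0) * (pX x * f x) + (βl0 ^ 2 - βu0 ^ 2) * pX x)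
          hkint hkc hL)
        (right_aux (h := fun x => 2 * (βu0 - βl0) * (pX x * f x) + (βl0 ^ 2 - βu0 ^ 2) * pX x)
          hkint hkc hR)
    have hfac : pX d0 * ((βu0 - βl0) * (2 * f d0 - βl0 - βu0)) = 0 := by
      calc pX d0 * ((βu0 - βl0) * (2 * f d0 - βl0 - βu0))
          = 2 * (βu0 - βl0) * (pX d0 * f d0) + (βl0 ^ 2 - βu0 ^ 2) * pX d0 := by ring
        _ = 0 := hk0
    have h2 : (βu0 - βl0) * (2 * f d0 - βl0 - βu0) = 0 := by
      rcases mul_eq_zero.mp hfac with h | h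
      · exact absurd h hpd.ne'
      · exact h
    have h3 : 2 * f d0 - βl0 - βu0 = 0 := by
      rcases mul_eq_zero.mp h2 with h | h
      · exact absurd (sub_eq_zero.mp h) hne
      · exact h
    linarith
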